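/- (Proposition 1, deterministic form.) Consider the dynamics with cost c = 0. Assume: (i) for every period t ≤ n−1 the least accurate agent l_t and the most accurate agent h_t are unique (no ties at the minimum or the maximum of accuracy); (ii) for every t ≤ n−2, l_t ≠ h_0; and (iii) for every t ≤ n−2, P^{h_t}_t(l_t,k) ≠ G_t(l_t,k) for some k ∉ {l_t,h_t} (the chosen most accurate agent misperceives at least one of the updater's link states with a third party). Then the agents h_0, l_0, l_1, …, l_{n−2} are n pairwise distinct agents; h_{t+1} = l_t for every 0 ≤ t ≤ n−2; for every 1 ≤ t ≤ n−1 the network G_t is exactly the path h_0 — l_0 — l_1 — ⋯ — l_{t−1} (all other agents isolated); at period n−1 the unique least accurate agent is h_0 and the link {h_0, l_{n−2}} is added, so that G_n is exactly the n-cycle h_0 — l_0 — ⋯ — l_{n−2} — h_0. -/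

import Mathlib

open Finset

/-- Accuracy of perception `P` with respect to network `G` on `n` agents. -/
noncomputable def acc (n : ℕ) (G P : Fin n → Fin n → Bool) : ℝ :=
  (((Finset.univ : Finset (Fin n × Fin n)).filter fun pr =>
      pr.1 < pr.2 ∧ P pr.1 pr.2 = G pr.1 pr.2).card : ℝ) / ((n : ℝ) * ((n : ℝ) - 1) / 2)

/-- The coevolution dynamics of a network and perceptions, with linking cost `c`.
`G t` is the network at period `t`, `P t i` is agent `i`'s perception at period `t`,
`l t` is the chosen least accurate agent and `h t` the chosen most accurate agent. -/
structure Dyn (n : ℕ) (c : ℝ) where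
  G : ℕ → Fin n → Fin n → Bool
  P : ℕ → Fin n → Fin n → Fin n → Bool
  l : ℕ → Fin n
  h : ℕ → Fin n
  G_symm : ∀ t j k, G t j k = G t k j
  G_irrefl : ∀ t i, G t i i = false
  P_symm : ∀ t i j k, P t i j k = P t i k j
  P_irrefl : ∀ t i j, P t i j j = false
  G_init : ∀ j k, G 0 j k = false
  own_correct : ∀ t i k, P t i i k = G t i k
  l_min : ∀ t i, acc n (G t) (P t (l t)) ≤ acc n (G t) (P t i)
  h_max : ∀ t i, acc n (G t) (P t i) ≤ acc n (G t) (P t (h t))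
  h_pref : ∀ t, (∃ i, G t (l t) i = true ∧
      ∀ j, acc n (G t) (P t j) ≤ acc n (G t) (P t i)) → G t (l t) (h t) = true
  step_old : ∀ t, G t (l t) (h t) = true →
      (G (t + 1) = G t ∧
        ∀ j k, j ≠ l t → k ≠ l t → P (t + 1) (l t) j k = P t (h t) j k)
  step_add : ∀ t, G t (l t) (h t) = false →
      c < 2 / (n : ℝ) + (1 - 2 / (n : ℝ)) * acc n (G t) (P t (h t))
          - acc n (G t) (P t (l t)) →
      ((∀ j k, G (t + 1) j k = true ↔
          (G t j k = true ∨ (j = l t ∧ k = h t) ∨ (j = h t ∧ k = l t))) ∧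
        ∀ j k, j ≠ l t → k ≠ l t → P (t + 1) (l t) j k = P t (h t) j k)
  step_none : ∀ t, G t (l t) (h t) = false →
      ¬ (c < 2 / (n : ℝ) + (1 - 2 / (n : ℝ)) * acc n (G t) (P t (h t))
          - acc n (G t) (P t (l t))) →
      (G (t + 1) = G t ∧ ∀ i, P (t + 1) i = P t i)
  keep : ∀ t i, i ≠ l t → ∀ j k, j ≠ i → k ≠ i → P (t + 1) i j k = P t i j k

namespace Dyn

variable {n : ℕ} {c : ℝ}

/-- Accuracy of agent `i` at period `t`. -/
noncomputable def rho (D : Dyn n c) (t : ℕ) (i : Fin n) : ℝ :=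
  acc n (D.G t) (D.P t i)

/-- The threshold cost `c_t = 2/n + (1 − 2/n)·ρ^{h_t}_t − ρ^{l_t}_t`. -/
noncomputable def thr (D : Dyn n c) (t : ℕ) : ℝ :=
  2 / (n : ℝ) + (1 - 2 / (n : ℝ)) * D.rho t (D.h t) - D.rho t (D.l t)

/-- Number of links in a network. -/
def numLinks (G : Fin n → Fin n → Bool) : ℕ :=
  ((Finset.univ : Finset (Fin n × Fin n)).filter fun pr =>
    pr.1 < pr.2 ∧ G pr.1 pr.2 = true).card

end Dyn

lemma bool_eq_of_iff {a b : Bool} (h : a = true ↔ b = true) : a = b := by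
  cases a <;> cases b <;> simp_all

section cnt
variable {n : ℕ}

lemma card_lt_pairs (n : ℕ) :
    2 * ((univ : Finset (Fin n × Fin n)).filter fun p => p.1 < p.2).card = n * n - n := by
  classical
  have hswap : ((univ : Finset (Fin n × Fin n)).filter fun p => p.1 < p.2).card
      = ((univ : Finset (Fin n × Fin n)).filter fun p => p.2 < p.1).card := by
    apply Finset.card_bij' (fun p _ => (p.2, p.1)) (fun p _ => (p.2, p.1)) <;>
      simp [and_comm]
  have hpart : ((univ : Finset (Fin n × Fin n)).filter fun p => p.1 < p.2).card
      + ((univ : Finset (Fin n × Fin n)).filter fun p => p.2 < p.1).card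
      = ((univ : Finset (Fin n × Fin n)).filter fun p => p.1 ≠ p.2).card := by
    rw [← Finset.card_union_of_disjoint]
    · congr 1
      ext p
      simp only [mem_union, mem_filter, mem_univ, true_and, ne_eq]
      constructor
      · rintro (h | h)
        · exact fun he => absurd h (by simp [he])
        · exact fun he => absurd h (by simp [he])
      · intro h
        rcases lt_or_gt_of_ne h with h' | h'
        · exact Or.inl h'
        · exact Or.inr h'
    · rw [Finset.disjoint_filter]
      intro p _ h1
      exact fun h2 => absurd h1 (not_lt.2 h2.le)
  have hdiag : ((univ : Finset (Fin n × Fin n)).filter fun p => ¬ p.1 ≠ p.2).card = n := by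
    have he : ((univ : Finset (Fin n × Fin n)).filter fun p => ¬ p.1 ≠ p.2)
        = Finset.diag (univ : Finset (Fin n)) := by
      ext p
      simp [Finset.mem_diag, not_ne_iff]
    rw [he, Finset.diag_card, card_univ, Fintype.card_fin]
  have htot := Finset.card_filter_add_card_filter_not
    (s := (univ : Finset (Fin n × Fin n))) (p := fun p => p.1 ≠ p.2)
  simp only [Finset.card_univ, Fintype.card_prod, Fintype.card_fin] at htot
  omega

end cnt

section accl
variable {n : ℕ} {c : ℝ} (D : Dyn n c)

/-- match count -/
def mct (t : ℕ) (i : Fin n) : ℕ :=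
  (((Finset.univ : Finset (Fin n × Fin n))).filter fun pr =>
      pr.1 < pr.2 ∧ D.P t i pr.1 pr.2 = D.G t pr.1 pr.2).card

lemma rho_eq (t : ℕ) (i : Fin n) :
    D.rho t i = (mct D t i : ℝ) / ((n : ℝ) * ((n : ℝ) - 1) / 2) := rfl

lemma Mpos (hn : 3 ≤ n) : (0:ℝ) < (n : ℝ) * ((n : ℝ) - 1) / 2 := by
  have h3 : (3:ℝ) ≤ (n:ℝ) := by exact_mod_cast hn
  nlinarith

lemma rho_lt_iff (hn : 3 ≤ n) {t t' : ℕ} {i j : Fin n} :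
    D.rho t i < D.rho t' j ↔ mct D t i < mct D t' j := by
  rw [rho_eq, rho_eq, div_lt_div_iff_of_pos_right (Mpos hn), Nat.cast_lt]

lemma rho_le_iff (hn : 3 ≤ n) {t t' : ℕ} {i j : Fin n} :
    D.rho t i ≤ D.rho t' j ↔ mct D t i ≤ mct D t' j := by
  rw [rho_eq, rho_eq, div_le_div_iff_of_pos_right (Mpos hn), Nat.cast_le]

lemma MnatR (hn : 3 ≤ n) :
    ((((Finset.univ : Finset (Fin n × Fin n))).filter fun p => p.1 < p.2).card : ℝ)
      = (n : ℝ) * ((n : ℝ) - 1) / 2 := by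
  have h := card_lt_pairs n
  have hle : n ≤ n * n := Nat.le_mul_of_pos_left n (by omega)
  have : (2:ℝ) * (((Finset.univ : Finset (Fin n × Fin n)).filter fun p => p.1 < p.2).card : ℝ)
      = (n:ℝ) * (n:ℝ) - (n:ℝ) := by
    exact_mod_cast congrArg (Nat.cast : ℕ → ℝ) h
  linarith

lemma mct_le (t : ℕ) (i : Fin n) :
    mct D t i ≤ (((Finset.univ : Finset (Fin n × Fin n))).filter fun p => p.1 < p.2).card := by
  apply Finset.card_le_card
  intro p hp
  rw [Finset.mem_filter] at hp ⊢
  exact ⟨hp.1, hp.2.1⟩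

lemma rho_le_one (hn : 3 ≤ n) (t : ℕ) (i : Fin n) : D.rho t i ≤ 1 := by
  rw [rho_eq]
  rw [div_le_one (Mpos hn), ← MnatR hn]
  exact_mod_cast mct_le D t i

lemma rho_lt_one (hn : 3 ≤ n) {t : ℕ} {i : Fin n} {x y : Fin n} (hxy : x ≠ y)
    (hm : D.P t i x y ≠ D.G t x y) : D.rho t i < 1 := by
  have hss : mct D t i < (((Finset.univ : Finset (Fin n × Fin n))).filter fun p => p.1 < p.2).card := by
    apply Finset.card_lt_card
    rw [Finset.ssubset_iff_of_subset]
    · rcases lt_or_gt_of_ne hxy with hlt | hlt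
      · exact ⟨(x, y), by simp [hlt], by simp [hlt, hm]⟩
      · refine ⟨(y, x), by simp [hlt], ?_⟩
        simp only [Finset.mem_filter, Finset.mem_univ, true_and, not_and]
        intro _
        rw [D.P_symm, D.G_symm]
        exact hm
    · intro p hp
      rw [Finset.mem_filter] at hp ⊢
      exact ⟨hp.1, hp.2.1⟩
  rw [rho_eq, div_lt_one (Mpos hn), ← MnatR hn]
  exact_mod_cast hss

lemma thr_pos (hn : 3 ≤ n) {t : ℕ} (hl1 : D.rho t (D.l t) < 1) : 0 < D.thr t := by
  have hlh : D.rho t (D.l t) ≤ D.rho t (D.h t) := D.l_min t (D.h t)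
  have h3 : (3:ℝ) ≤ (n:ℝ) := by exact_mod_cast hn
  have hn0 : (0:ℝ) < (n:ℝ) := by linarith
  have h2n : 0 < 2 / (n:ℝ) := by positivity
  have h2n1 : 2 / (n:ℝ) ≤ 1 := by
    rw [div_le_one hn0]; linarith
  unfold Dyn.thr
  nlinarith [mul_le_mul_of_nonneg_left hlh (by linarith : (0:ℝ) ≤ 1 - 2 / (n:ℝ)),
    mul_pos h2n (by linarith : (0:ℝ) < 1 - D.rho t (D.l t))]

end accl

section steps
variable {n : ℕ} {c : ℝ} (D : Dyn n c)

lemma card_filter_split {α : Type*} (s : Finset α) (p q : α → Prop)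
    [DecidablePred p] [DecidablePred q] :
    (s.filter p).card = (s.filter fun a => p a ∧ q a).card
      + (s.filter fun a => p a ∧ ¬ q a).card := by
  rw [← Finset.card_filter_add_card_filter_not (p := q) (s := s.filter p),
    Finset.filter_filter, Finset.filter_filter]

lemma card_pairs_with (i : Fin n) :
    ((univ : Finset (Fin n × Fin n)).filter fun p => p.1 < p.2 ∧ (p.1 = i ∨ p.2 = i)).card
      = n - 1 := by
  have h : ((univ : Finset (Fin n × Fin n)).filter fun p => p.1 < p.2 ∧ (p.1 = i ∨ p.2 = i)).card
      = ((univ : Finset (Fin n)).erase i).card := by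
    apply Finset.card_nbij' (i := fun p => if p.1 = i then p.2 else p.1)
      (j := fun x => if x < i then (x, i) else (i, x))
    · intro p hp
      rw [Finset.mem_coe, Finset.mem_filter] at hp
      rcases hp.2.2 with h1 | h2
      · have h2 : p.2 ≠ i := fun he => absurd hp.2.1 (by rw [h1, he]; exact lt_irrefl i)
        simp [h1, h2]
      · have h1 : p.1 ≠ i := fun he => absurd hp.2.1 (by rw [he, h2]; exact lt_irrefl i)
        simp [h1, h2]
    · intro x hx
      rw [Finset.mem_coe, Finset.mem_erase] at hx
      rcases lt_or_gt_of_ne hx.1 with h1 | h1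
      · simp [h1]
      · have h2 : ¬ x < i := not_lt.2 h1.le
        simp [h1, h2]
    · intro p hp
      rw [Finset.mem_coe, Finset.mem_filter] at hp
      rcases hp.2.2 with h1 | h2
      · have h2 : p.2 ≠ i := fun he => absurd hp.2.1 (by rw [h1, he]; exact lt_irrefl i)
        have h3 : ¬ p.2 < i := by rw [← h1]; exact not_lt.2 hp.2.1.le
        simp only [if_pos h1, if_neg h3]
        exact Prod.ext h1.symm rfl
      · have h1 : p.1 ≠ i := fun he => absurd hp.2.1 (by rw [he, h2]; exact lt_irrefl i)
        have h3 : p.1 < i := h2 ▸ hp.2.1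
        simp only [if_neg h1, if_pos h3]
        exact Prod.ext rfl h2.symm
    · intro x hx
      rw [Finset.mem_coe, Finset.mem_erase] at hx
      rcases lt_or_gt_of_ne hx.1 with h1 | h1
      · simp [h1, hx.1]
      · have h2 : ¬ x < i := not_lt.2 h1.le
        simp [h1, h2]
  rw [h, Finset.card_erase_of_mem (Finset.mem_univ i), Finset.card_univ, Fintype.card_fin]

variable {t : ℕ}

lemma Goff (hstepG : ∀ j k, D.G (t+1) j k = true ↔
      (D.G t j k = true ∨ (j = D.l t ∧ k = D.h t) ∨ (j = D.h t ∧ k = D.l t)))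
    {j k : Fin n} (hj : ¬ (j = D.l t ∧ k = D.h t)) (hk : ¬ (j = D.h t ∧ k = D.l t)) :
    D.G (t+1) j k = D.G t j k := by
  apply bool_eq_of_iff
  rw [hstepG]
  constructor
  · rintro (h | h | h)
    · exact h
    · exact absurd h hj
    · exact absurd h hk
  · exact fun h => Or.inl h

lemma S1 (hn : 3 ≤ n)
    (hstepG : ∀ j k, D.G (t+1) j k = true ↔
      (D.G t j k = true ∨ (j = D.l t ∧ k = D.h t) ∨ (j = D.h t ∧ k = D.l t)))
    (hstepP : ∀ j k, j ≠ D.l t → k ≠ D.l t → D.P (t+1) (D.l t) j k = D.P t (D.h t) j k)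
    {ks : Fin n} (hk1 : ks ≠ D.l t) (hk3 : D.P t (D.h t) (D.l t) ks ≠ D.G t (D.l t) ks) :
    mct D t (D.h t) < mct D (t + 1) (D.l t) := by
  classical
  set l := D.l t with hl
  set h := D.h t with hh
  -- the common off part
  set X := ((univ : Finset (Fin n × Fin n)).filter fun p =>
      (p.1 < p.2 ∧ ¬ (p.1 = l ∨ p.2 = l)) ∧ D.P t h p.1 p.2 = D.G t p.1 p.2).card with hX
  have hmctl : mct D (t+1) l = (n - 1) + X := by
    rw [show mct D (t+1) l = ((univ : Finset (Fin n × Fin n)).filter fun p =>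
        p.1 < p.2 ∧ D.P (t+1) l p.1 p.2 = D.G (t+1) p.1 p.2).card from rfl,
      card_filter_split _ _ (fun p => p.1 = l ∨ p.2 = l)]
    congr 1
    · rw [← card_pairs_with (n := n) l]
      congr 1
      apply Finset.filter_congr
      intro p _
      constructor
      · rintro ⟨⟨h1, _⟩, h2⟩; exact ⟨h1, h2⟩
      · rintro ⟨h1, h2⟩
        refine ⟨⟨h1, ?_⟩, h2⟩
        rcases h2 with h2 | h2
        · rw [h2, D.own_correct]
        · rw [h2, D.P_symm, D.own_correct, D.G_symm]
    · rw [hX]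
      congr 1
      apply Finset.filter_congr
      intro p _
      constructor
      · rintro ⟨⟨h1, h2⟩, h3⟩
        push_neg at h3
        refine ⟨⟨h1, by push_neg; exact h3⟩, ?_⟩
        rw [← hstepP _ _ h3.1 h3.2, h2]
        exact Goff D hstepG (fun hc => h3.1 hc.1) (fun hc => h3.2 hc.2)
      · rintro ⟨⟨h1, h3⟩, h2⟩
        push_neg at h3
        refine ⟨⟨h1, ?_⟩, by push_neg; exact h3⟩
        rw [hstepP _ _ h3.1 h3.2, h2]
        exact (Goff D hstepG (fun hc => h3.1 hc.1) (fun hc => h3.2 hc.2)).symm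
  have hmcth : mct D t h ≤ (n - 2) + X := by
    rw [show mct D t h = ((univ : Finset (Fin n × Fin n)).filter fun p =>
        p.1 < p.2 ∧ D.P t h p.1 p.2 = D.G t p.1 p.2).card from rfl,
      card_filter_split _ _ (fun p => p.1 = l ∨ p.2 = l)]
    have hB2 : ((univ : Finset (Fin n × Fin n)).filter fun p =>
        (p.1 < p.2 ∧ D.P t h p.1 p.2 = D.G t p.1 p.2) ∧ ¬ (p.1 = l ∨ p.2 = l)).card = X := by
      rw [hX]
      congr 1
      apply Finset.filter_congr
      intro p _
      tauto
    rw [hB2]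
    have hB1 : ((univ : Finset (Fin n × Fin n)).filter fun p =>
        (p.1 < p.2 ∧ D.P t h p.1 p.2 = D.G t p.1 p.2) ∧ (p.1 = l ∨ p.2 = l)).card ≤ n - 2 := by
      set ps : Fin n × Fin n := if l < ks then (l, ks) else (ks, l) with hps
      have hpsmem : ps ∈ (univ : Finset (Fin n × Fin n)).filter
          fun p => p.1 < p.2 ∧ (p.1 = l ∨ p.2 = l) := by
        rcases lt_or_gt_of_ne hk1.symm with h1 | h1
        · rw [hps, if_pos h1]; simp [h1]
        · rw [hps, if_neg (not_lt.2 h1.le)]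
          simp [h1]
      have hsub : ((univ : Finset (Fin n × Fin n)).filter fun p =>
          (p.1 < p.2 ∧ D.P t h p.1 p.2 = D.G t p.1 p.2) ∧ (p.1 = l ∨ p.2 = l))
          ⊆ ((univ : Finset (Fin n × Fin n)).filter
            fun p => p.1 < p.2 ∧ (p.1 = l ∨ p.2 = l)).erase ps := by
        intro p hp
        rw [Finset.mem_filter] at hp
        rw [Finset.mem_erase]
        constructor
        · intro hpe
          rcases lt_or_gt_of_ne hk1.symm with h1 | h1
          · rw [hps, if_pos h1] at hpe
            have := hp.2.1.2
            rw [hpe] at this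
            exact hk3 this
          · rw [hps, if_neg (not_lt.2 h1.le)] at hpe
            have := hp.2.1.2
            rw [hpe] at this
            rw [D.P_symm, D.G_symm] at this
            exact hk3 this
        · rw [Finset.mem_filter]
          exact ⟨Finset.mem_univ p, hp.2.1.1, hp.2.2⟩
      calc _ ≤ (((univ : Finset (Fin n × Fin n)).filter
            fun p => p.1 < p.2 ∧ (p.1 = l ∨ p.2 = l)).erase ps).card := Finset.card_le_card hsub
        _ = n - 1 - 1 := by rw [Finset.card_erase_of_mem hpsmem, card_pairs_with]
        _ = n - 2 := by omega
    omega
  omega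

lemma S2 (hstepG : ∀ j k, D.G (t+1) j k = true ↔
      (D.G t j k = true ∨ (j = D.l t ∧ k = D.h t) ∨ (j = D.h t ∧ k = D.l t)))
    {i : Fin n} (hil : i ≠ D.l t) :
    mct D (t + 1) i ≤ mct D t i + 1 := by
  classical
  set e : Fin n × Fin n := if D.l t < D.h t then (D.l t, D.h t) else (D.h t, D.l t) with he
  have hsub : ((univ : Finset (Fin n × Fin n)).filter fun p =>
      p.1 < p.2 ∧ D.P (t+1) i p.1 p.2 = D.G (t+1) p.1 p.2)
      ⊆ insert e ((univ : Finset (Fin n × Fin n)).filter fun p =>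
        p.1 < p.2 ∧ D.P t i p.1 p.2 = D.G t p.1 p.2) := by
    intro p hp
    rw [Finset.mem_filter] at hp
    by_cases hpe : p = e
    · rw [hpe]; exact Finset.mem_insert_self _ _
    · apply Finset.mem_insert_of_mem
      rw [Finset.mem_filter]
      refine ⟨Finset.mem_univ p, hp.2.1, ?_⟩
      by_cases h1 : p.1 = i
      · rw [h1, D.own_correct]
      by_cases h2 : p.2 = i
      · rw [h2, D.P_symm, D.own_correct, D.G_symm]
      have hGp : D.G (t+1) p.1 p.2 = D.G t p.1 p.2 := by
        apply Goff D hstepG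
        · rintro ⟨ha, hb⟩
          apply hpe
          have hlth : D.l t < D.h t := by rw [← ha, ← hb]; exact hp.2.1
          rw [he, if_pos hlth]
          exact Prod.ext ha hb
        · rintro ⟨ha, hb⟩
          apply hpe
          have hlth : ¬ D.l t < D.h t := by
            rw [← hb, ← ha]; exact not_lt.2 hp.2.1.le
          rw [he, if_neg hlth]
          exact Prod.ext ha hb
      rw [← D.keep t i hil p.1 p.2 h1 h2, hp.2.2, hGp]
  calc mct D (t+1) i ≤ (insert e ((univ : Finset (Fin n × Fin n)).filter fun p =>
        p.1 < p.2 ∧ D.P t i p.1 p.2 = D.G t p.1 p.2)).card := Finset.card_le_card hsub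
    _ ≤ mct D t i + 1 := Finset.card_insert_le _ _

lemma S3 (hlh : D.l t ≠ D.h t)
    (hstepG : ∀ j k, D.G (t+1) j k = true ↔
      (D.G t j k = true ∨ (j = D.l t ∧ k = D.h t) ∨ (j = D.h t ∧ k = D.l t))) :
    mct D (t + 1) (D.h t) ≤ mct D t (D.h t) := by
  apply Finset.card_le_card
  intro p hp
  rw [Finset.mem_filter] at hp ⊢
  refine ⟨Finset.mem_univ p, hp.2.1, ?_⟩
  by_cases h1 : p.1 = D.h t
  · rw [h1, D.own_correct]
  by_cases h2 : p.2 = D.h t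
  · rw [h2, D.P_symm, D.own_correct, D.G_symm]
  have hGp : D.G (t+1) p.1 p.2 = D.G t p.1 p.2 := by
    apply Goff D hstepG
    · rintro ⟨_, hb⟩; exact h2 hb
    · rintro ⟨ha, _⟩; exact h1 ha
  rw [← D.keep t (D.h t) (Ne.symm hlh) p.1 p.2 h1 h2, hp.2.2, hGp]

lemma newh (hn : 3 ≤ n) (ht : t ≤ n - 1)
    (huniqt : ∀ i, i ≠ D.h t → D.rho t i < D.rho t (D.h t))
    (hlh : D.l t ≠ D.h t)
    (hstepG : ∀ j k, D.G (t+1) j k = true ↔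
      (D.G t j k = true ∨ (j = D.l t ∧ k = D.h t) ∨ (j = D.h t ∧ k = D.l t)))
    (hstepP : ∀ j k, j ≠ D.l t → k ≠ D.l t → D.P (t+1) (D.l t) j k = D.P t (D.h t) j k)
    {ks : Fin n} (hk1 : ks ≠ D.l t) (hk3 : D.P t (D.h t) (D.l t) ks ≠ D.G t (D.l t) ks) :
    D.h (t + 1) = D.l t := by
  have key : ∀ i, i ≠ D.l t → mct D (t+1) i < mct D (t+1) (D.l t) := by
    intro i hi
    have hs1 := S1 D hn hstepG hstepP hk1 hk3
    by_cases hih : i = D.h t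
    · rw [hih]
      exact lt_of_le_of_lt (S3 D hlh hstepG) hs1
    · have h2 := S2 D hstepG (t := t) (i := i) hi
      have h3 : mct D t i < mct D t (D.h t) := (rho_lt_iff D hn).1 (huniqt i hih)
      omega
  by_contra hne
  have h1 : D.rho (t+1) (D.l t) ≤ D.rho (t+1) (D.h (t+1)) := D.h_max (t+1) (D.l t)
  have h2 : mct D (t+1) (D.h (t+1)) < mct D (t+1) (D.l t) := key _ hne
  rw [rho_le_iff D hn] at h1
  omega

end steps

section chain
variable {n : ℕ} {c : ℝ} (D : Dyn n c) (v : ℕ → Fin n)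

/-- invariant of the dynamics -/
def DInv (t : ℕ) : Prop :=
  (∀ a b, a ≤ t → b ≤ t → a ≠ b → v a ≠ v b) ∧
  (∀ s, 1 ≤ s → s ≤ t → D.h s = v s) ∧
  (∀ u, u ≤ t → ∀ j k, D.G u j k = true ↔
    ∃ s, s < u ∧ ((j = v s ∧ k = v (s + 1)) ∨ (j = v (s + 1) ∧ k = v s))) ∧
  (∀ s, 1 ≤ s → s ≤ t → ∀ j k, j ≠ v s → k ≠ v s →
    D.P s (v s) j k = D.P (s - 1) (v (s - 1)) j k)

lemma desc {τ : ℕ}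
    (hI4 : ∀ s, 1 ≤ s → s ≤ τ → ∀ j k, j ≠ v s → k ≠ v s →
      D.P s (v s) j k = D.P (s - 1) (v (s - 1)) j k) :
    ∀ s, s ≤ τ → ∀ s', s' ≤ s → ∀ j k, (∀ i, s' < i → i ≤ s → j ≠ v i ∧ k ≠ v i) →
      D.P s (v s) j k = D.P s' (v s') j k := by
  intro s
  induction s with
  | zero =>
    intro _ s' hs' j k _
    have : s' = 0 := by omega
    subst this; rfl
  | succ m ih =>
    intro hm s' hs' j k hcond
    by_cases he : s' = m + 1
    · subst he; rfl
    · have h1 : s' ≤ m := by omega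
      have hj := hcond (m + 1) (by omega) le_rfl
      rw [hI4 (m + 1) (by omega) hm j k hj.1 hj.2]
      simp only [Nat.add_sub_cancel]
      exact ih (by omega) s' h1 j k (fun i hi1 hi2 => hcond i hi1 (by omega))

lemma persist (i : Fin n) :
    ∀ t1 t0, t0 ≤ t1 → (∀ s, t0 ≤ s → s < t1 → i ≠ D.l s) →
      ∀ j k, j ≠ i → k ≠ i → D.P t1 i j k = D.P t0 i j k := by
  intro t1
  induction t1 with
  | zero =>
    intro t0 h0 _ j k _ _
    have : t0 = 0 := by omega
    subst this; rfl
  | succ m ih =>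
    intro t0 h0 hne j k hj hk
    by_cases he : t0 = m + 1
    · subst he; rfl
    · rw [D.keep m i (hne m (by omega) (by omega)) j k hj hk]
      exact ih t0 (by omega) (fun s hs1 hs2 => hne s hs1 (by omega)) j k hj hk

end chain

section master
variable {n : ℕ} (D : Dyn n 0) (v : ℕ → Fin n)

lemma mainInv (hn : 3 ≤ n)
    (huniq : ∀ t, t ≤ n - 1 →
      (∀ i, i ≠ D.l t → D.rho t (D.l t) < D.rho t i) ∧
      (∀ i, i ≠ D.h t → D.rho t i < D.rho t (D.h t)))
    (hmis : ∀ t, t ≤ n - 2 → ∃ k, k ≠ D.l t ∧ k ≠ D.h t ∧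
      D.P t (D.h t) (D.l t) k ≠ D.G t (D.l t) k)
    (hv0 : v 0 = D.h 0) (hvs : ∀ s, v (s + 1) = D.l s) :
    ∀ t, t ≤ n - 1 → DInv D v t := by
  intro t
  induction t with
  | zero =>
    intro _
    refine ⟨?_, ?_, ?_, ?_⟩
    · intro a b ha hb hab; omega
    · intro s h1 h2; omega
    · intro u hu j k
      have : u = 0 := by omega
      subst this
      simp [D.G_init]
    · intro s h1 h2; omega
  | succ t ih =>
    intro ht1
    have ht2 : t ≤ n - 2 := by omega
    obtain ⟨I1, I2, I3, I4⟩ := ih (by omega)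
    have hinj : ∀ a b, a ≤ t → b ≤ t → v a = v b → a = b := by
      intro a b ha hb he
      by_contra hne
      exact I1 a b ha hb hne he
    have hht : D.h t = v t := by
      cases t with
      | zero => exact hv0.symm
      | succ m => exact I2 (m + 1) (by omega) le_rfl
    obtain ⟨ks, hk1, hk2, hk3⟩ := hmis t ht2
    have hlh : D.l t ≠ D.h t := fun he => hk3 (by rw [← he, D.own_correct])
    have hdesc := desc D v I4
    have hfresh : ∀ s, s ≤ t → v s ≠ D.l t := by
      intro s hs hvs'
      by_cases hst : s = t
      · exact hlh ((hht.trans (hst ▸ hvs')).symm)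
      · have hst' : s < t := by omega
        apply hk3
        rw [← hvs', hht]
        by_cases hki : ∃ i, s < i ∧ i ≤ t ∧ ks = v i
        · obtain ⟨i, hi1, hi2, rfl⟩ := hki
          have hit : i ≠ t := fun he => hk2 (by rw [he, hht])
          have hit' : i < t := by omega
          rw [D.P_symm]
          rw [hdesc t le_rfl i (by omega) (v i) (v s) (fun i' h1 h2 =>
            ⟨I1 i i' (by omega) h2 (by omega), I1 s i' (by omega) h2 (by omega)⟩)]
          rw [D.own_correct]
          apply bool_eq_of_iff
          rw [I3 i (by omega) (v i) (v s), I3 t le_rfl (v s) (v i)]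
          constructor
          · rintro ⟨u, hu, ⟨ha, hb⟩ | ⟨ha, hb⟩⟩
            · have : u = i := hinj u i (by omega) (by omega) ha.symm
              omega
            · exact ⟨u, by omega, Or.inl ⟨hb, ha⟩⟩
          · rintro ⟨u, hu, ⟨ha, hb⟩ | ⟨ha, hb⟩⟩
            · have hui : i = u + 1 := hinj i (u + 1) (by omega) (by omega) hb
              exact ⟨u, by omega, Or.inr ⟨hb, ha⟩⟩
            · have : u = i := hinj u i (by omega) (by omega) hb.symm
              have : s = u + 1 := hinj s (u + 1) (by omega) (by omega) ha
              omega
        · push_neg at hki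
          rw [hdesc t le_rfl s (by omega) (v s) ks (fun i' h1 h2 =>
            ⟨I1 s i' (by omega) h2 (by omega), fun he => hki i' h1 h2 he⟩)]
          rw [D.own_correct]
          apply bool_eq_of_iff
          rw [I3 s (by omega) (v s) ks, I3 t le_rfl (v s) ks]
          constructor
          · rintro ⟨u, hu, hor⟩
            exact ⟨u, by omega, hor⟩
          · rintro ⟨u, hu, ⟨ha, hb⟩ | ⟨ha, hb⟩⟩
            · have : u = s := hinj u s (by omega) (by omega) ha.symm
              exact absurd hb (hki (u + 1) (by omega) (by omega))
            · have : u + 1 = s := hinj (u + 1) s (by omega) (by omega) ha.symm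
              exact ⟨u, by omega, Or.inr ⟨ha, hb⟩⟩
    have hGlh : D.G t (D.l t) (D.h t) = false := by
      cases hb : D.G t (D.l t) (D.h t) with
      | false => rfl
      | true =>
        exfalso
        rcases (I3 t le_rfl _ _).1 hb with ⟨u, hu, ⟨ha, _⟩ | ⟨ha, _⟩⟩
        · exact hfresh u (by omega) ha.symm
        · exact hfresh (u + 1) (by omega) ha.symm
    have hρh : D.rho t (D.h t) < 1 := rho_lt_one D hn (Ne.symm hk1) hk3
    have hρl : D.rho t (D.l t) < 1 := lt_of_le_of_lt (D.l_min t (D.h t)) hρh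
    have hthr : (0:ℝ) < 2 / (n : ℝ) + (1 - 2 / (n : ℝ)) * acc n (D.G t) (D.P t (D.h t))
        - acc n (D.G t) (D.P t (D.l t)) := thr_pos D hn hρl
    obtain ⟨hstepG, hstepP⟩ := D.step_add t hGlh hthr
    have hnh : D.h (t + 1) = D.l t :=
      newh D hn (by omega) (huniq t (by omega)).2 hlh hstepG hstepP hk1 hk3
    have hvl : v (t + 1) = D.l t := hvs t
    refine ⟨?_, ?_, ?_, ?_⟩
    · intro a b ha hb hab he
      by_cases ha' : a ≤ t
      · by_cases hb' : b ≤ t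
        · exact I1 a b ha' hb' hab he
        · have : b = t + 1 := by omega
          exact hfresh a ha' (by rw [he, this, hvl])
      · have ha2 : a = t + 1 := by omega
        have hb' : b ≤ t := by omega
        exact hfresh b hb' (by rw [← he, ha2, hvl])
    · intro s h1 h2
      by_cases hs : s ≤ t
      · exact I2 s h1 hs
      · have : s = t + 1 := by omega
        subst this
        rw [hvl]
        exact hnh
    · intro u hu j k
      by_cases hu' : u ≤ t
      · exact I3 u hu' j k
      · have : u = t + 1 := by omega
        subst this
        rw [hstepG j k]
        constructor
        · rintro (hg | ⟨rfl, rfl⟩ | ⟨rfl, rfl⟩)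
          · obtain ⟨s, hs, hor⟩ := (I3 t le_rfl j k).1 hg
            exact ⟨s, by omega, hor⟩
          · exact ⟨t, by omega, Or.inr ⟨hvl.symm, hht⟩⟩
          · exact ⟨t, by omega, Or.inl ⟨hht, hvl.symm⟩⟩
        · rintro ⟨s, hs, hor⟩
          by_cases hst : s < t
          · exact Or.inl ((I3 t le_rfl j k).2 ⟨s, hst, hor⟩)
          · have : s = t := by omega
            subst this
            rcases hor with ⟨ha, hb⟩ | ⟨ha, hb⟩
            · exact Or.inr (Or.inr ⟨by rw [ha, ← hht], by rw [hb, hvl]⟩)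
            · exact Or.inr (Or.inl ⟨by rw [ha, hvl], by rw [hb, ← hht]⟩)
    · intro s h1 h2 j k hj hk
      by_cases hs : s ≤ t
      · exact I4 s h1 hs j k hj hk
      · have : s = t + 1 := by omega
        subst this
        simp only [Nat.add_sub_cancel]
        rw [hvl, hstepP j k (by rw [← hvl]; exact hj) (by rw [← hvl]; exact hk), hht]

end master

/-- Proposition 1 (deterministic form), cost `c = 0`.  Label the agents by update order:
`v 0 = h_0` and `v (s+1) = l_s`.  Under uniqueness of the least/most accurate agents up to
period `n−1`, `l_t ≠ h_0` for `t ≤ n−2`, and misperception by `h_t` of some link state of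
`l_t` with a third party, the agents `v 0, …, v (n−1)` are pairwise distinct,
`h_{t+1} = l_t`, for `1 ≤ t ≤ n−1` the network `G_t` is exactly the path
`v 0 — v 1 — ⋯ — v t` (all other agents isolated), at period `n−1` the unique least
accurate agent is `h_0` (i.e. `l_{n−1} = v 0`) and the link `{h_0, l_{n−2}}` is added, so
that `G_n` is exactly the `n`-cycle `v 0 — v 1 — ⋯ — v (n−1) — v 0`. -/
theorem stmt7 (n : ℕ) (hn : 3 ≤ n) (D : Dyn n 0)
    (huniq : ∀ t, t ≤ n - 1 →
      (∀ i, i ≠ D.l t → D.rho t (D.l t) < D.rho t i) ∧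
      (∀ i, i ≠ D.h t → D.rho t i < D.rho t (D.h t)))
    (hlh0 : ∀ t, t ≤ n - 2 → D.l t ≠ D.h 0)
    (hmis : ∀ t, t ≤ n - 2 → ∃ k, k ≠ D.l t ∧ k ≠ D.h t ∧
      D.P t (D.h t) (D.l t) k ≠ D.G t (D.l t) k)
    (v : ℕ → Fin n) (hv0 : v 0 = D.h 0) (hvs : ∀ s, v (s + 1) = D.l s) :
    (∀ s s', s ≤ n - 1 → s' ≤ n - 1 → s ≠ s' → v s ≠ v s') ∧
    (∀ t, t ≤ n - 2 → D.h (t + 1) = D.l t) ∧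
    (∀ t, 1 ≤ t → t ≤ n - 1 → ∀ j k, D.G t j k = true ↔
      ∃ s, s < t ∧ ((j = v s ∧ k = v (s + 1)) ∨ (j = v (s + 1) ∧ k = v s))) ∧
    D.l (n - 1) = D.h 0 ∧
    (∀ j k, D.G n j k = true ↔
      ∃ s, s < n ∧ ((j = v s ∧ k = v ((s + 1) % n)) ∨ (j = v ((s + 1) % n) ∧ k = v s))) := by

  have hT : 1 ≤ n - 1 := by omega
  obtain ⟨I1, I2, I3, I4⟩ := mainInv D v hn huniq hmis hv0 hvs (n - 1) le_rfl
  have hinj : ∀ a b, a ≤ n - 1 → b ≤ n - 1 → v a = v b → a = b := by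
    intro a b ha hb he
    by_contra hne
    exact I1 a b ha hb hne he
  -- surjectivity of the labeling
  have hsurj : ∀ x : Fin n, ∃ r, r ≤ n - 1 ∧ v r = x := by
    have himg : ((Finset.range n).image fun s => v s) = Finset.univ := by
      apply Finset.eq_univ_of_card
      rw [Finset.card_image_of_injOn, Finset.card_range, Fintype.card_fin]
      intro a ha b hb he
      exact hinj a b (by simp at ha; omega) (by simp at hb; omega) he
    intro x
    have hx : x ∈ (Finset.range n).image fun s => v s := himg ▸ Finset.mem_univ x
    obtain ⟨r, hr, hvr⟩ := Finset.mem_image.1 hx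
    exact ⟨r, by simp at hr; omega, hvr⟩
  -- G characterization
  have hGchar : ∀ u, u ≤ n - 1 → ∀ a b, a ≤ n - 1 → b ≤ n - 1 →
      (D.G u (v a) (v b) = true ↔ ((a < u ∧ b = a + 1) ∨ (b < u ∧ a = b + 1))) := by
    intro u hu a b ha hb
    rw [I3 u hu (v a) (v b)]
    constructor
    · rintro ⟨s, hs, ⟨h1, h2⟩ | ⟨h1, h2⟩⟩
      · have e1 : a = s := hinj a s (by omega) (by omega) h1
        have e2 : b = s + 1 := hinj b (s + 1) (by omega) (by omega) h2
        omega
      · have e1 : a = s + 1 := hinj a (s + 1) (by omega) (by omega) h1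
        have e2 : b = s := hinj b s (by omega) (by omega) h2
        omega
    · rintro (⟨h1, h2⟩ | ⟨h1, h2⟩)
      · exact ⟨a, h1, Or.inl ⟨rfl, by rw [h2]⟩⟩
      · exact ⟨b, h1, Or.inr ⟨by rw [h2], rfl⟩⟩
  have hdesc := desc D v I4
  have hP1 : ∀ r, r ≤ n - 1 → ∀ j k, j ≠ v r → k ≠ v r →
      D.P (n - 1) (v r) j k = D.P r (v r) j k := by
    intro r hr j k hj hk
    apply persist D (v r) (n - 1) r hr _ j k hj hk
    intro s hs1 hs2
    have : D.l s = v (s + 1) := (hvs s).symm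
    rw [this]
    exact I1 r (s + 1) hr (by omega) (by omega)
  -- the chained copy facts
  have hmatch_gt : ∀ r a b, r ≤ n - 1 → a ≤ n - 1 → b ≤ n - 1 → r < a → r < b → a ≠ b →
      D.P (n - 1) (v r) (v a) (v b) = D.P 0 (v 0) (v a) (v b) := by
    intro r a b hr ha hb hra hrb hab
    rw [hP1 r hr (v a) (v b) (I1 a r ha hr (by omega)) (I1 b r hb hr (by omega))]
    exact hdesc r hr 0 (by omega) (v a) (v b) (fun i h1 h2 =>
      ⟨I1 a i ha (by omega) (by omega), I1 b i hb (by omega) (by omega)⟩)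
  have hmatch_lt : ∀ r a b, r ≤ n - 1 → a ≤ n - 1 → b ≤ n - 1 → a < r → b ≠ r → a ≠ b →
      D.P (n - 1) (v r) (v a) (v b) = D.G (n - 1) (v a) (v b) := by
    intro r a b hr ha hb har hbr hab
    rw [hP1 r hr (v a) (v b) (I1 a r ha hr (by omega)) (I1 b r hb hr hbr)]
    by_cases hblt : b < r
    · -- descend to m := max a b
      rcases Nat.lt_or_ge a b with hab' | hab'
      · -- a < b, m = b
        rw [hdesc r hr b (by omega) (v a) (v b) (fun i h1 h2 =>
          ⟨I1 a i ha (by omega) (by omega), I1 b i hb (by omega) (by omega)⟩)]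
        rw [D.P_symm, D.own_correct, D.G_symm]
        apply bool_eq_of_iff
        rw [hGchar b (by omega) a b ha hb, hGchar (n - 1) le_rfl a b ha hb]
        constructor
        · rintro (⟨h1, h2⟩ | ⟨h1, h2⟩) <;> omega
        · rintro (⟨h1, h2⟩ | ⟨h1, h2⟩) <;> omega
      · -- b < a, m = a
        rw [hdesc r hr a (by omega) (v a) (v b) (fun i h1 h2 =>
          ⟨I1 a i ha (by omega) (by omega), I1 b i hb (by omega) (by omega)⟩)]
        rw [D.own_correct]
        apply bool_eq_of_iff
        rw [hGchar a (by omega) a b ha hb, hGchar (n - 1) le_rfl a b ha hb]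
        constructor
        · rintro (⟨h1, h2⟩ | ⟨h1, h2⟩) <;> omega
        · rintro (⟨h1, h2⟩ | ⟨h1, h2⟩) <;> omega
    · -- a < r < b
      have hbgt : r < b := by omega
      rw [hdesc r hr a (by omega) (v a) (v b) (fun i h1 h2 =>
        ⟨I1 a i ha (by omega) (by omega), I1 b i hb (by omega) (by omega)⟩)]
      rw [D.own_correct]
      apply bool_eq_of_iff
      rw [hGchar a (by omega) a b ha hb, hGchar (n - 1) le_rfl a b ha hb]
      constructor
      · rintro (⟨h1, h2⟩ | ⟨h1, h2⟩) <;> omega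
      · rintro (⟨h1, h2⟩ | ⟨h1, h2⟩) <;> omega
  -- the crucial comparison
  have hle : ∀ r, 1 ≤ r → r ≤ n - 1 → mct D (n - 1) (v 0) ≤ mct D (n - 1) (v r) := by
    intro r hr1 hr2
    apply Finset.card_le_card
    intro p hp
    rw [Finset.mem_filter] at hp ⊢
    obtain ⟨_, hlt, hm0⟩ := hp
    refine ⟨Finset.mem_univ p, hlt, ?_⟩
    obtain ⟨a, ha, hva⟩ := hsurj p.1
    obtain ⟨b, hb, hvb⟩ := hsurj p.2
    have hab : a ≠ b := by
      intro he
      rw [← hva, ← hvb, he] at hlt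
      exact lt_irrefl _ hlt
    rw [← hva, ← hvb]
    by_cases har : a = r
    · rw [har, D.own_correct]
    by_cases hbr : b = r
    · rw [hbr, D.P_symm, D.own_correct, D.G_symm]
    by_cases halt : a < r
    · exact hmatch_lt r a b hr2 ha hb halt hbr hab
    by_cases hblt : b < r
    · rw [D.P_symm, D.G_symm]
      exact hmatch_lt r b a hr2 hb ha hblt har (Ne.symm hab)
    · have hra : r < a := by omega
      have hrb : r < b := by omega
      rw [hmatch_gt r a b hr2 ha hb hra hrb hab]
      rw [← hva, ← hvb] at hm0
      rw [← hmatch_gt 0 a b (by omega) ha hb (by omega) (by omega) hab]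
      exact hm0
  -- the least accurate agent at period n-1 is v 0
  have hlT : D.l (n - 1) = v 0 := by
    obtain ⟨r, hr, hvr⟩ := hsurj (D.l (n - 1))
    by_cases hr0 : r = 0
    · rw [← hvr, hr0]
    · exfalso
      have hne : v 0 ≠ D.l (n - 1) := by
        rw [← hvr]
        exact I1 0 r (by omega) hr (Ne.symm hr0)
      have h1 := (huniq (n - 1) le_rfl).1 (v 0) hne
      rw [← hvr, rho_lt_iff D hn] at h1
      have h2 := hle r (by omega) hr
      omega
  have hhT : D.h (n - 1) = v (n - 1) := I2 (n - 1) hT le_rfl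
  have hGlhT : D.G (n - 1) (D.l (n - 1)) (D.h (n - 1)) = false := by
    rw [hlT, hhT]
    cases hbv : D.G (n - 1) (v 0) (v (n - 1)) with
    | false => rfl
    | true =>
      exfalso
      rcases (hGchar (n - 1) le_rfl 0 (n - 1) (by omega) le_rfl).1 hbv with h | h <;> omega
  have hρl1 : D.rho (n - 1) (D.l (n - 1)) < 1 := by
    have hne : v 1 ≠ D.l (n - 1) := by
      rw [hlT]
      exact I1 1 0 (by omega) (by omega) (by omega)
    exact lt_of_lt_of_le ((huniq (n - 1) le_rfl).1 (v 1) hne) (rho_le_one D hn (n - 1) (v 1))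
  have hthrT : (0:ℝ) < 2 / (n : ℝ) + (1 - 2 / (n : ℝ))
      * acc n (D.G (n - 1)) (D.P (n - 1) (D.h (n - 1)))
      - acc n (D.G (n - 1)) (D.P (n - 1) (D.l (n - 1))) := thr_pos D hn hρl1
  obtain ⟨hstepG, _⟩ := D.step_add (n - 1) hGlhT hthrT
  have hn1 : n - 1 + 1 = n := by omega
  rw [hn1] at hstepG
  refine ⟨?_, ?_, ?_, ?_, ?_⟩
  · exact fun s s' hs hs' hne => I1 s s' hs hs' hne
  · intro t ht
    rw [I2 (t + 1) (by omega) (by omega), hvs t]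
  · exact fun t ht1 ht2 => I3 t ht2
  · rw [hlT, hv0]
  · intro j k
    rw [hstepG j k, hlT, hhT]
    constructor
    · rintro (hg | ⟨rfl, rfl⟩ | ⟨rfl, rfl⟩)
      · obtain ⟨s, hs, hor⟩ := (I3 (n - 1) le_rfl j k).1 hg
        refine ⟨s, by omega, ?_⟩
        rw [Nat.mod_eq_of_lt (by omega : s + 1 < n)]
        exact hor
      · refine ⟨n - 1, by omega, Or.inr ⟨?_, rfl⟩⟩
        rw [hn1, Nat.mod_self]
      · refine ⟨n - 1, by omega, Or.inl ⟨rfl, ?_⟩⟩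
        rw [hn1, Nat.mod_self]
    · rintro ⟨s, hs, hor⟩
      by_cases hst : s < n - 1
      · rw [Nat.mod_eq_of_lt (by omega : s + 1 < n)] at hor
        exact Or.inl ((I3 (n - 1) le_rfl j k).2 ⟨s, hst, hor⟩)
      · have hseq : s = n - 1 := by omega
        subst hseq
        rw [hn1, Nat.mod_self] at hor
        rcases hor with ⟨h1, h2⟩ | ⟨h1, h2⟩
        · exact Or.inr (Or.inr ⟨h1, h2⟩)
        · exact Or.inr (Or.inl ⟨h1, h2⟩)
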